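/- For any complex numbers a and T with |a| ≤ 2|T|, the square roots with nonnegative imaginary part satisfy |Im √(a+T) − Im √a| ≤ (√3 + √2)·√|T|. -/

import Mathlib

/-- For complex `a, T` with `|a| ≤ 2|T|`, the square roots chosen with
nonnegative imaginary part satisfy `|Im √(a+T) − Im √a| ≤ (√3+√2)√|T|`. -/
theorem stmt3 (a T w₁ w₂ : ℂ) (haT : ‖a‖ ≤ 2 * ‖T‖)
    (h₁ : w₁ ^ 2 = a + T) (h₂ : w₂ ^ 2 = a)
    (him₁ : 0 ≤ w₁.im) (him₂ : 0 ≤ w₂.im) :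
    |w₁.im - w₂.im| ≤ (Real.sqrt 3 + Real.sqrt 2) * Real.sqrt (‖T‖) := by
  have hT : (0:ℝ) ≤ ‖T‖ := norm_nonneg T
  have hw₁ : ‖w₁‖ = Real.sqrt (‖a + T‖) := by
    rw [← h₁, norm_pow, Real.sqrt_sq (norm_nonneg w₁)]
  have hw₂ : ‖w₂‖ = Real.sqrt (‖a‖) := by
    rw [← h₂, norm_pow, Real.sqrt_sq (norm_nonneg w₂)]
  have b1 : w₁.im ≤ Real.sqrt 3 * Real.sqrt (‖T‖) := by
    calc w₁.im ≤ ‖w₁‖ := Complex.im_le_norm w₁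
      _ = Real.sqrt (‖a + T‖) := hw₁
      _ ≤ Real.sqrt (3 * ‖T‖) := by
          apply Real.sqrt_le_sqrt
          calc ‖a + T‖ ≤ ‖a‖ + ‖T‖ := norm_add_le _ _
            _ ≤ 2 * ‖T‖ + ‖T‖ := by linarith
            _ = 3 * ‖T‖ := by ring
      _ = Real.sqrt 3 * Real.sqrt (‖T‖) := Real.sqrt_mul (by norm_num) _
  have b2 : w₂.im ≤ Real.sqrt 2 * Real.sqrt (‖T‖) := by
    calc w₂.im ≤ ‖w₂‖ := Complex.im_le_norm w₂
      _ = Real.sqrt (‖a‖) := hw₂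
      _ ≤ Real.sqrt (2 * ‖T‖) := Real.sqrt_le_sqrt haT
      _ = Real.sqrt 2 * Real.sqrt (‖T‖) := Real.sqrt_mul (by norm_num) _
  rw [abs_sub_le_iff]
  constructor <;> nlinarith [Real.sqrt_nonneg 2, Real.sqrt_nonneg 3, Real.sqrt_nonneg (‖T‖)]
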